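/- Let (B, L, θ) be a Boolean dynamical system. The following are equivalent: (1) either B = {∅}, or B ∖ {∅} is the only maximal tail of (B, L, θ) and B ∖ {∅} is not a cyclic maximal tail; (2) (B, L, θ) is minimal and satisfies Condition (L); (3) (B, L, θ) is minimal and satisfies Condition (K). -/

import Mathlib

namespace BoolDyn

variable {X L : Type*}

section Defs

variable [GeneralizedBooleanAlgebra X]

/-- A map `X → X` is an action on the generalized Boolean algebra `X` if it preserves
`⊥`, `⊔`, `⊓` and `\`. -/
def IsBoolAction (f : X → X) : Prop :=
  f ⊥ = ⊥ ∧ (∀ a b : X, f (a ⊔ b) = f a ⊔ f b) ∧ (∀ a b : X, f (a ⊓ b) = f a ⊓ f b) ∧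
    ∀ a b : X, f (a \ b) = f a \ f b

/-- `θ_β := θ_{β_n} ∘ ⋯ ∘ θ_{β_1}` for a word `β = β_1 ⋯ β_n ∈ L^*`, with `θ_∅ = id`. -/
def thetaWord (θ : L → X → X) (β : List L) (a : X) : X :=
  β.foldl (fun x α => θ α x) a

/-- `Δ_a := {α ∈ L : θ_α(a) ≠ ∅}`. -/
def Delta (θ : L → X → X) (a : X) : Set L := {α : L | θ α a ≠ ⊥}

/-- `a` is regular if `0 < |Δ_b| < ∞` for every nonempty `b ⊆ a`. -/
def IsRegularElem (θ : L → X → X) (a : X) : Prop :=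
  ∀ b : X, b ≤ a → b ≠ ⊥ → (Delta θ b).Finite ∧ (Delta θ b).Nonempty

/-- `B_reg`, the set of regular elements. -/
def regSet (θ : L → X → X) : Set X := {a : X | IsRegularElem θ a}

/-- An ideal of a generalized Boolean algebra: a nonempty subset closed under `⊔` and
downward closed under `≤`. -/
structure IsIdeal (I : Set X) : Prop where
  nonempty : I.Nonempty
  sup_mem : ∀ ⦃a b : X⦄, a ∈ I → b ∈ I → a ⊔ b ∈ I
  lower : ∀ ⦃a b : X⦄, a ∈ I → b ≤ a → b ∈ I

/-- A hereditary subset: closed under all the actions. -/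
def Hereditary (θ : L → X → X) (H : Set X) : Prop := ∀ a ∈ H, ∀ α : L, θ α a ∈ H

/-- Saturated: `a ∈ H` whenever `a` is regular and `θ_α(a) ∈ H` for every `α ∈ Δ_a`. -/
def Saturated (θ : L → X → X) (H : Set X) : Prop :=
  ∀ a : X, IsRegularElem θ a → (∀ α ∈ Delta θ a, θ α a ∈ H) → a ∈ H

/-- `J`-saturated: `a ∈ H` whenever `a ∈ J` and `θ_α(a) ∈ H` for every `α ∈ Δ_a`. -/
def JSaturated (θ : L → X → X) (J H : Set X) : Prop :=
  ∀ a ∈ J, (∀ α ∈ Delta θ a, θ α a ∈ H) → a ∈ H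

/-- A cycle: `β` nonempty, `a ≠ ∅`, and `θ_β(b) = b` for every `b ⊆ a`. -/
def IsCycle (θ : L → X → X) (β : List L) (a : X) : Prop :=
  β ≠ [] ∧ a ≠ ⊥ ∧ ∀ b : X, b ≤ a → thetaWord θ β b = b

/-- `(β, a)` has no exits: for every `t ∈ {1,…,n}` and every nonempty `b ⊆ θ_{β_{1,t}}(a)`,
`b` is regular and `Δ_b = {β_{t+1}}` (with `β_{n+1} := β_1`). -/
def NoExits (θ : L → X → X) (β : List L) (a : X) : Prop :=
  ∀ t : ℕ, 1 ≤ t → t ≤ β.length →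
    ∀ b : X, b ≤ thetaWord θ (β.take t) a → b ≠ ⊥ →
      IsRegularElem θ b ∧ Delta θ b = {α : L | β[t % β.length]? = some α}

/-- Condition (L): there is no cycle with no exits. -/
def CondL (θ : L → X → X) : Prop :=
  ¬ ∃ (β : List L) (a : X), IsCycle θ β a ∧ NoExits θ β a

/-- A filter of a generalized Boolean algebra. -/
structure IsBoolFilter (F : Set X) : Prop where
  nonempty : F.Nonempty
  bot_not_mem : ⊥ ∉ F
  inf_mem : ∀ ⦃a b : X⦄, a ∈ F → b ∈ F → a ⊓ b ∈ F
  upper : ∀ ⦃a b : X⦄, a ∈ F → a ≤ b → b ∈ F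

/-- An ultrafilter: a maximal filter. -/
def IsUltra (F : Set X) : Prop :=
  IsBoolFilter F ∧ ∀ G : Set X, IsBoolFilter G → F ⊆ G → G = F

/-- A filter of the ideal `I`, viewed as a generalized Boolean algebra in its own right. -/
structure IsFilterOn (I F : Set X) : Prop where
  subset : F ⊆ I
  nonempty : F.Nonempty
  bot_not_mem : ⊥ ∉ F
  inf_mem : ∀ ⦃a b : X⦄, a ∈ F → b ∈ F → a ⊓ b ∈ F
  upper : ∀ a b : X, a ∈ F → b ∈ I → a ≤ b → b ∈ F

/-- An ultrafilter of the ideal `I`: a maximal filter of `I`. -/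
def IsUltraOn (I F : Set X) : Prop :=
  IsFilterOn I F ∧ ∀ G : Set X, IsFilterOn I G → F ⊆ G → G = F

/-- `R_α := {a ∈ B : a ≤ θ_α(c) for some c ∈ B}`. -/
def Rset (θ : L → X → X) (α : L) : Set X := {a : X | ∃ c : X, a ≤ θ α c}

/-- `β^k`, the `k`-fold concatenation of the word `β`. -/
def wordPow (β : List L) : ℕ → List L
  | 0 => []
  | k + 1 => β ++ wordPow β k

/-- An ultrafilter cycle. -/
def UltrafilterCycle (θ : L → X → X) (β : List L) (η : Set X) : Prop :=
  β ≠ [] ∧ IsUltra η ∧ ∀ a ∈ η, thetaWord θ β a ∈ η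

/-- A maximal tail. -/
structure MaximalTail (θ : L → X → X) (T : Set X) : Prop where
  nonempty : T.Nonempty
  not_bot_mem : ⊥ ∉ T
  t2 : ∀ (a : X) (α : L), θ α a ∈ T → a ∈ T
  t3 : ∀ a b : X, a ⊔ b ∈ T → a ∈ T ∨ b ∈ T
  t4 : ∀ a b : X, a ∈ T → a ≤ b → b ∈ T
  t5 : ∀ a : X, a ∈ T → IsRegularElem θ a → ∃ α : L, θ α a ∈ T
  t6 : ∀ a b : X, a ∈ T → b ∈ T →
    ∃ β γ : List L, thetaWord θ β a ⊓ thetaWord θ γ b ∈ T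

/-- A cyclic (maximal) tail. -/
def CyclicTail (θ : L → X → X) (T : Set X) : Prop :=
  ∃ (β : List L) (η : Set X), UltrafilterCycle θ β η ∧
    T = {b : X | ∃ γ : List L, thetaWord θ γ b ∈ η} ∧
    ∃ A ∈ η, ∀ γ : List L, γ ≠ [] → ∀ b : X, b ≤ A → thetaWord θ γ b ∈ η →
      b ∈ η ∧ ∃ k : ℕ, 0 < k ∧ γ = wordPow β k

/-- Condition (K). -/
def CondK (θ : L → X → X) : Prop :=
  ¬ ∃ (β : List L) (η : Set X) (A : X), UltrafilterCycle θ β η ∧ A ∈ η ∧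
    ∀ γ : List L, γ ≠ [] → ∀ b : X, b ≤ A → thetaWord θ γ b ∈ η →
      b ∈ η ∧ ∃ k : ℕ, 0 < k ∧ γ = wordPow β k

/-- `H(A) = {b : b ≤ ⋃_{β ∈ F} θ_β(A) for some finite F ⊆ L^*}`. -/
def HA (θ : L → X → X) (A : X) : Set X :=
  {b : X | ∃ F : Finset (List L), b ≤ F.sup fun β => thetaWord θ β A}

/-- `I₁ ⊕ I₂`, the smallest ideal containing the ideals `I₁` and `I₂`. -/
def oplus (I₁ I₂ : Set X) : Set X := {c : X | ∃ a ∈ I₁, ∃ b ∈ I₂, c = a ⊔ b}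

/-- `S(H(A))`. -/
def SHA (θ : L → X → X) (A : X) : Set X :=
  {b : X | ∃ n : ℕ, (∀ β : List L, β.length = n → thetaWord θ β b ∈ HA θ A) ∧
    ∀ γ : List L, γ.length < n → thetaWord θ γ b ∈ oplus (HA θ A) (regSet θ)}

/-- Minimality: `{∅}` and `B` are the only saturated hereditary ideals. -/
def Minimal (θ : L → X → X) : Prop :=
  ∀ H : Set X, IsIdeal H → Hereditary θ H → Saturated θ H → H = {⊥} ∨ H = Set.univ

end Defs

end BoolDyn

open BoolDyn


set_option linter.unusedSectionVars false

namespace BoolDynAux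

variable {X L : Type*} [GeneralizedBooleanAlgebra X] {θ : L → X → X}

lemma tw_nil (a : X) : thetaWord θ [] a = a := rfl

lemma tw_cons (α : L) (γ : List L) (a : X) :
    thetaWord θ (α :: γ) a = thetaWord θ γ (θ α a) := rfl

lemma tw_append (u v : List L) (a : X) :
    thetaWord θ (u ++ v) a = thetaWord θ v (thetaWord θ u a) :=
  List.foldl_append

section Basics

variable (hθ : ∀ α : L, IsBoolAction (θ α))
include hθ

lemma act_bot (α : L) : θ α ⊥ = ⊥ := (hθ α).1
lemma act_sup (α : L) (a b : X) : θ α (a ⊔ b) = θ α a ⊔ θ α b := (hθ α).2.1 a b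
lemma act_inf (α : L) (a b : X) : θ α (a ⊓ b) = θ α a ⊓ θ α b := (hθ α).2.2.1 a b
lemma act_sdiff (α : L) (a b : X) : θ α (a \ b) = θ α a \ θ α b := (hθ α).2.2.2 a b

lemma act_mono (α : L) {a b : X} (h : a ≤ b) : θ α a ≤ θ α b := by
  have h2 := act_sup hθ α a b
  rw [sup_eq_right.2 h] at h2
  rw [h2]; exact le_sup_left

lemma tw_bot (γ : List L) : thetaWord θ γ (⊥ : X) = ⊥ := by
  induction γ with
  | nil => rfl
  | cons α γ ih => rw [tw_cons, act_bot hθ]; exact ih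

lemma tw_mono (γ : List L) {a b : X} (h : a ≤ b) :
    thetaWord θ γ a ≤ thetaWord θ γ b := by
  induction γ generalizing a b with
  | nil => exact h
  | cons α γ ih => rw [tw_cons, tw_cons]; exact ih (act_mono hθ α h)

lemma tw_sup (γ : List L) (a b : X) :
    thetaWord θ γ (a ⊔ b) = thetaWord θ γ a ⊔ thetaWord θ γ b := by
  induction γ generalizing a b with
  | nil => rfl
  | cons α γ ih => rw [tw_cons, act_sup hθ, ih]; rfl

lemma tw_inf (γ : List L) (a b : X) :
    thetaWord θ γ (a ⊓ b) = thetaWord θ γ a ⊓ thetaWord θ γ b := by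
  induction γ generalizing a b with
  | nil => rfl
  | cons α γ ih => rw [tw_cons, act_inf hθ, ih]; rfl

lemma tw_sdiff (γ : List L) (a b : X) :
    thetaWord θ γ (a \ b) = thetaWord θ γ a \ thetaWord θ γ b := by
  induction γ generalizing a b with
  | nil => rfl
  | cons α γ ih => rw [tw_cons, act_sdiff hθ, ih]; rfl

lemma tw_ne_bot_of (γ : List L) {a : X} (h : thetaWord θ γ a ≠ ⊥) : a ≠ ⊥ := by
  intro h'; subst h'; exact h (tw_bot hθ γ)

end Basics

lemma tw_take_succ (hθ : ∀ α : L, IsBoolAction (θ α)) (γ : List L) (i : ℕ)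
    (h : i < γ.length) (a : X) :
    thetaWord θ (γ.take (i+1)) a = θ γ[i] (thetaWord θ (γ.take i) a) := by
  rw [List.take_succ, List.getElem?_eq_getElem h]
  show thetaWord θ (γ.take i ++ [γ[i]]) a = _
  rw [tw_append]; rfl

section WordPow

variable {M : Type*}

lemma wordPow_length (β : List M) (k : ℕ) : (wordPow β k).length = k * β.length := by
  induction k with
  | zero => simp [wordPow]
  | succ k ih =>
    show (β ++ wordPow β k).length = _
    rw [List.length_append, ih]; ring

lemma wordPow_getElem (β : List M) (k : ℕ) (j : ℕ) (hj : j < (wordPow β k).length)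
    (hn : 0 < β.length) :
    (wordPow β k)[j] = β[j % β.length]'(Nat.mod_lt _ hn) := by
  induction k generalizing j with
  | zero => rw [wordPow_length] at hj; omega
  | succ k ih =>
    show (β ++ wordPow β k)[j]'(by simpa [wordPow] using hj) = _
    by_cases h : j < β.length
    · rw [List.getElem_append_left h]
      congr 1
      exact (Nat.mod_eq_of_lt h).symm
    · push_neg at h
      have hj2 : j < (k+1) * β.length := by rw [← wordPow_length β (k+1)]; exact hj
      rw [Nat.succ_mul] at hj2
      have hj' : j - β.length < (wordPow β k).length := by
        rw [wordPow_length]; omega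
      rw [List.getElem_append_right h]
      rw [ih (j - β.length) hj']
      congr 1
      conv_rhs => rw [show j = (j - β.length) + β.length by omega]
      rw [Nat.add_mod_right]

lemma eq_wordPow_append_track (β γ : List M) (hn : 0 < β.length) (k r : ℕ)
    (hlen : γ.length = k * β.length + r) (hr : r < β.length)
    (htrack : ∀ j (hj : j < γ.length), γ[j] = β[j % β.length]'(Nat.mod_lt _ hn)) :
    γ = wordPow β k ++ β.take r := by
  apply List.ext_getElem
  · rw [List.length_append, wordPow_length, List.length_take]; omega
  · intro j h1 h2
    rw [htrack j h1]
    by_cases h : j < (wordPow β k).length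
    · rw [List.getElem_append_left h, wordPow_getElem β _ j h hn]
    · push_neg at h
      rw [List.getElem_append_right h]
      rw [wordPow_length] at h
      have hlt : j - k * β.length < r := by
        have : j < γ.length := h1; omega
      rw [List.getElem_take]
      congr 1
      rw [wordPow_length]
      conv_lhs => rw [show j = (j - k * β.length) + k * β.length by omega]
      rw [Nat.add_mul_mod_self_right]
      exact Nat.mod_eq_of_lt (show j - k * β.length < β.length by omega)

lemma eq_wordPow_of_track (β γ : List M) (hn : 0 < β.length) (k : ℕ)
    (hlen : γ.length = k * β.length)
    (htrack : ∀ j (hj : j < γ.length), γ[j] = β[j % β.length]'(Nat.mod_lt _ hn)) :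
    γ = wordPow β k := by
  have := eq_wordPow_append_track β γ hn k 0 (by omega) hn htrack
  simpa using this

lemma tw_wordPow_fix (hθ : ∀ α : L, IsBoolAction (θ α)) {β : List L} {a : X}
    (hfix : ∀ b : X, b ≤ a → thetaWord θ β b = b) {y : X} (hy : y ≤ a) (k : ℕ) :
    thetaWord θ (wordPow β k) y = y := by
  induction k with
  | zero => rfl
  | succ k ih =>
    show thetaWord θ (β ++ wordPow β k) y = y
    rw [tw_append, hfix y hy, ih]

end WordPow


section Filters

lemma ideal_bot_mem {H : Set X} (hH : IsIdeal H) : (⊥ : X) ∈ H := by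
  obtain ⟨x, hx⟩ := hH.nonempty
  exact hH.lower hx bot_le

/-- a "good" filter w.r.t. an ideal `H`: a prime filter disjoint from `H`. -/
def Good (H : Set X) (F : Set X) : Prop :=
  F.Nonempty ∧ (∀ x ∈ F, x ∉ H) ∧ (∀ ⦃x y : X⦄, x ∈ F → y ∈ F → x ⊓ y ∈ F) ∧
    (∀ ⦃x y : X⦄, x ∈ F → x ≤ y → y ∈ F) ∧ ∀ ⦃x y : X⦄, x ⊔ y ∈ F → x ∈ F ∨ y ∈ F

lemma exists_good_ext {H : Set X} (hH : IsIdeal H)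
    (G₀ : Set X) (hne : G₀.Nonempty) (hdisj : ∀ x ∈ G₀, x ∉ H)
    (hinf : ∀ ⦃x y : X⦄, x ∈ G₀ → y ∈ G₀ → x ⊓ y ∈ G₀)
    (hup : ∀ ⦃x y : X⦄, x ∈ G₀ → x ≤ y → y ∈ G₀) :
    ∃ G : Set X, Good H G ∧ G₀ ⊆ G := by
  classical
  set S : Set (Set X) := {G | G₀ ⊆ G ∧ (∀ x ∈ G, x ∉ H) ∧
    (∀ ⦃x y : X⦄, x ∈ G → y ∈ G → x ⊓ y ∈ G) ∧ ∀ ⦃x y : X⦄, x ∈ G → x ≤ y → y ∈ G} with hS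
  have hG₀S : G₀ ∈ S := ⟨le_refl _, hdisj, hinf, hup⟩
  obtain ⟨m, hsub, hm⟩ := zorn_subset_nonempty S (fun c hc hchain hcne => by
    obtain ⟨F₁, hF₁⟩ := hcne
    refine ⟨⋃₀ c, ⟨?_, ?_, ?_, ?_⟩, fun s hs => Set.subset_sUnion_of_mem hs⟩
    · exact le_trans (hc hF₁).1 (Set.subset_sUnion_of_mem hF₁)
    · rintro x ⟨F, hF, hxF⟩
      exact (hc hF).2.1 x hxF
    · rintro x y ⟨F, hF, hxF⟩ ⟨F', hF', hyF⟩
      rcases hchain.total hF hF' with h | h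
      · exact ⟨F', hF', (hc hF').2.2.1 (h hxF) hyF⟩
      · exact ⟨F, hF, (hc hF).2.2.1 hxF (h hyF)⟩
    · rintro x y ⟨F, hF, hxF⟩ hxy
      exact ⟨F, hF, (hc hF).2.2.2 hxF hxy⟩) G₀ hG₀S
  obtain ⟨⟨hmG₀, hmdisj, hminf, hmup⟩, hmax⟩ := hm
  have hmne : m.Nonempty := hne.mono hmG₀
  refine ⟨m, ⟨hmne, hmdisj, hminf, hmup, ?_⟩, hsub⟩
  intro x y hxy
  by_contra hcon
  push_neg at hcon
  obtain ⟨hx, hy⟩ := hcon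
  have key : ∀ z : X, z ∉ m → ∃ c ∈ m, c ⊓ z ∈ H := by
    intro z hz
    set mz : Set X := {w | ∃ c ∈ m, c ⊓ z ≤ w} with hmz
    have hmsub : m ⊆ mz := fun c hc => ⟨c, hc, inf_le_left⟩
    have hzmem : z ∈ mz := by
      obtain ⟨c, hc⟩ := hmne
      exact ⟨c, hc, inf_le_right⟩
    by_cases hd : ∀ w ∈ mz, w ∉ H
    · exfalso
      have hmzS : mz ∈ S := by
        refine ⟨le_trans hmG₀ hmsub, hd, ?_, ?_⟩
        · rintro u v ⟨c, hc, hcle⟩ ⟨d, hdm, hdle⟩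
          refine ⟨c ⊓ d, hminf hc hdm, le_inf ?_ ?_⟩
          · exact le_trans (inf_le_inf_right z inf_le_left) hcle
          · exact le_trans (inf_le_inf_right z inf_le_right) hdle
        · rintro u v ⟨c, hc, hcle⟩ huv
          exact ⟨c, hc, le_trans hcle huv⟩
      exact hz (hmax hmzS hmsub hzmem)
    · push_neg at hd
      obtain ⟨w, hwmz, hwH⟩ := hd
      obtain ⟨c, hcm, hcle⟩ := hwmz
      exact ⟨c, hcm, hH.lower hwH hcle⟩
  obtain ⟨c, hcm, hcH⟩ := key x hx
  obtain ⟨d, hdm, hdH⟩ := key y hy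
  have he : c ⊓ d ∈ m := hminf hcm hdm
  have h1 : (c ⊓ d) ⊓ x ∈ H := hH.lower hcH (inf_le_inf_right x inf_le_left)
  have h2 : (c ⊓ d) ⊓ y ∈ H := hH.lower hdH (inf_le_inf_right y inf_le_right)
  have h3 : (c ⊓ d) ⊓ (x ⊔ y) ∈ H := by
    rw [inf_sup_left]
    exact hH.sup_mem h1 h2
  exact hmdisj _ (hminf he hxy) h3

lemma ultra_prime {F : Set X} (hF : IsUltra F) {x y : X} (hxy : x ⊔ y ∈ F) :
    x ∈ F ∨ y ∈ F := by
  by_cases hx : x ∈ F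
  · exact Or.inl hx
  right
  set G : Set X := {z | ∃ c ∈ F, c ⊓ y ≤ z} with hG
  by_cases hbot : (⊥ : X) ∈ G
  · obtain ⟨c, hc, hcle⟩ := hbot
    have hcy : c ⊓ y = ⊥ := le_bot_iff.1 hcle
    have h1 : c ⊓ (x ⊔ y) ∈ F := hF.1.inf_mem hc hxy
    have h2 : c ⊓ (x ⊔ y) ≤ x := by
      rw [inf_sup_left, hcy, sup_bot_eq]
      exact inf_le_right
    exact absurd (hF.1.upper h1 h2) hx
  · have hGF : IsBoolFilter G := by
      refine ⟨hF.1.nonempty.imp fun c hc => ⟨c, hc, inf_le_left⟩, hbot, ?_, ?_⟩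
      · rintro u v ⟨c, hc, hcle⟩ ⟨d, hd, hdle⟩
        exact ⟨c ⊓ d, hF.1.inf_mem hc hd,
          le_inf (le_trans (inf_le_inf_right y inf_le_left) hcle)
            (le_trans (inf_le_inf_right y inf_le_right) hdle)⟩
      · rintro u v ⟨c, hc, hcle⟩ huv
        exact ⟨c, hc, le_trans hcle huv⟩
    have hsub : F ⊆ G := fun c hc => ⟨c, hc, inf_le_left⟩
    have := hF.2 G hGF hsub
    rw [← this]
    obtain ⟨c, hc⟩ := hF.1.nonempty
    exact ⟨c, hc, inf_le_right⟩

lemma exists_ultra {b : X} (hb : b ≠ ⊥) : ∃ F : Set X, IsUltra F ∧ b ∈ F := by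
  classical
  set S : Set (Set X) := {G | IsBoolFilter G ∧ b ∈ G} with hS
  have hbase : {x : X | b ≤ x} ∈ S := by
    refine ⟨⟨⟨b, le_refl b⟩, ?_, ?_, ?_⟩, le_refl b⟩
    · intro h; exact hb (le_bot_iff.1 h)
    · intro u v hu hv; exact le_inf hu hv
    · intro u v hu huv; exact le_trans hu huv
  obtain ⟨m, hsub, hm⟩ := zorn_subset_nonempty S (fun c hc hchain hcne => by
    obtain ⟨F₁, hF₁⟩ := hcne
    refine ⟨⋃₀ c, ⟨⟨?_, ?_, ?_, ?_⟩, ?_⟩, fun s hs => Set.subset_sUnion_of_mem hs⟩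
    · exact ⟨b, F₁, hF₁, (hc hF₁).2⟩
    · rintro ⟨F, hF, hbF⟩
      exact (hc hF).1.bot_not_mem hbF
    · rintro u v ⟨F, hF, huF⟩ ⟨F', hF', hvF⟩
      rcases hchain.total hF hF' with h | h
      · exact ⟨F', hF', (hc hF').1.inf_mem (h huF) hvF⟩
      · exact ⟨F, hF, (hc hF).1.inf_mem huF (h hvF)⟩
    · rintro u v ⟨F, hF, huF⟩ huv
      exact ⟨F, hF, (hc hF).1.upper huF huv⟩
    · exact ⟨F₁, hF₁, (hc hF₁).2⟩) _ hbase
  refine ⟨m, ⟨hm.1.1, ?_⟩, hm.1.2⟩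
  intro G hG hmG
  have hbG : b ∈ G := hmG hm.1.2
  exact le_antisymm (hm.2 ⟨hG, hbG⟩ hmG) hmG

end Filters

section Tails

lemma compl_tail_ideal {T : Set X} (hT : MaximalTail θ T) :
    IsIdeal {x : X | x ∉ T} ∧ Hereditary θ {x : X | x ∉ T} ∧ Saturated θ {x : X | x ∉ T} := by
  refine ⟨⟨⟨⊥, hT.not_bot_mem⟩, ?_, ?_⟩, ?_, ?_⟩
  · intro a b ha hb hab
    rcases hT.t3 a b hab with h | h
    exacts [ha h, hb h]
  · intro a b ha hba hb
    exact ha (hT.t4 b a hb hba)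
  · intro a ha α haT
    exact ha (hT.t2 a α haT)
  · intro a hreg hsub haT
    obtain ⟨α, hα⟩ := hT.t5 a haT hreg
    have hαbot : θ α a ≠ ⊥ := fun h => hT.not_bot_mem (h ▸ hα)
    exact hsub α hαbot hα

lemma tail_unique (hmin : Minimal θ) {T : Set X} (hT : MaximalTail θ T) :
    T = {a : X | a ≠ ⊥} := by
  obtain ⟨hid, hher, hsat⟩ := compl_tail_ideal hT
  rcases hmin _ hid hher hsat with h | h
  · ext x
    simp only [Set.mem_setOf_eq]
    constructor
    · rintro hx rfl; exact hT.not_bot_mem hx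
    · intro hx
      by_contra hxT
      have : x ∈ ({⊥} : Set X) := h ▸ hxT
      exact hx this
  · exfalso
    obtain ⟨x, hx⟩ := hT.nonempty
    have : x ∈ {y : X | y ∉ T} := h ▸ Set.mem_univ x
    exact this hx

variable (hθ : ∀ α : L, IsBoolAction (θ α))
include hθ

lemma uc_tail {β : List L} {η : Set X} (hUC : UltrafilterCycle θ β η) :
    MaximalTail θ {b : X | ∃ γ : List L, thetaWord θ γ b ∈ η} := by
  obtain ⟨hβne, hultra, hcyc⟩ := hUC
  have hfil := hultra.1
  constructor
  · obtain ⟨x, hx⟩ := hfil.nonempty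
    exact ⟨x, [], hx⟩
  · rintro ⟨γ, hγ⟩
    rw [tw_bot hθ] at hγ
    exact hfil.bot_not_mem hγ
  · rintro a α ⟨γ, hγ⟩
    exact ⟨α :: γ, hγ⟩
  · rintro a b ⟨γ, hγ⟩
    rw [tw_sup hθ] at hγ
    rcases ultra_prime hultra hγ with h | h
    · exact Or.inl ⟨γ, h⟩
    · exact Or.inr ⟨γ, h⟩
  · rintro a b ⟨γ, hγ⟩ hab
    exact ⟨γ, hfil.upper hγ (tw_mono hθ γ hab)⟩
  · rintro a ⟨γ, hγ⟩ _
    match γ with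
    | γ₁ :: γ' => exact ⟨γ₁, γ', hγ⟩
    | [] =>
      match β, hβne, hcyc with
      | β₁ :: β', _, hcyc =>
        exact ⟨β₁, β', hcyc a hγ⟩
  · rintro a b ⟨γ, hγ⟩ ⟨δ, hδ⟩
    exact ⟨γ, δ, [], hfil.inf_mem hγ hδ⟩

end Tails

section LemmaM

variable (hθ : ∀ α : L, IsBoolAction (θ α))

open Classical in
/-- iterated "forward orbit" of prime filters avoiding `H`. -/
noncomputable def chainSeq (θ : L → X → X) (H F0 : Set X) : ℕ → Option (Set X)
  | 0 => some F0
  | (k+1) =>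
    match chainSeq θ H F0 k with
    | none => none
    | some F =>
      if h : ∃ G : Set X, Good H G ∧ ∃ α : L, ∀ c ∈ F, θ α c ∈ G then some h.choose
      else none

lemma chainSeq_succ_some (θ : L → X → X) (H F0 : Set X) (k : ℕ) {F : Set X}
    (hk : chainSeq θ H F0 k = some F)
    (h : ∃ G : Set X, Good H G ∧ ∃ α : L, ∀ c ∈ F, θ α c ∈ G) :
    chainSeq θ H F0 (k+1) = some h.choose := by
  rw [chainSeq, hk]
  simp only [h, dite_true]

lemma chain_good {H F0 : Set X} (h0 : Good H F0) :
    ∀ k (F : Set X), chainSeq θ H F0 k = some F → Good H F := by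
  intro k
  induction k with
  | zero => intro F hF; rw [chainSeq] at hF; cases hF; exact h0
  | succ k ih =>
    intro F hF
    rw [chainSeq] at hF
    rcases hk : chainSeq θ H F0 k with _ | F'
    · rw [hk] at hF; cases hF
    · rw [hk] at hF
      by_cases h : ∃ G : Set X, Good H G ∧ ∃ α : L, ∀ c ∈ F', θ α c ∈ G
      · simp only [h, dite_true] at hF
        cases hF
        exact h.choose_spec.1
      · simp only [h, dite_false] at hF
        cases hF

lemma chain_succ_rel {H F0 : Set X} (k : ℕ) {G : Set X}
    (hG : chainSeq θ H F0 (k+1) = some G) :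
    ∃ F : Set X, chainSeq θ H F0 k = some F ∧ ∃ α : L, ∀ c ∈ F, θ α c ∈ G := by
  rw [chainSeq] at hG
  rcases hk : chainSeq θ H F0 k with _ | F'
  · rw [hk] at hG; cases hG
  · rw [hk] at hG
    by_cases h : ∃ G : Set X, Good H G ∧ ∃ α : L, ∀ c ∈ F', θ α c ∈ G
    · simp only [h, dite_true] at hG
      cases hG
      exact ⟨F', rfl, h.choose_spec.2⟩
    · simp only [h, dite_false] at hG
      cases hG

lemma chain_propagate {H F0 : Set X} (d k : ℕ) {F G : Set X}
    (hF : chainSeq θ H F0 k = some F) (hG : chainSeq θ H F0 (k+d) = some G) :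
    ∃ w : List L, ∀ c ∈ F, thetaWord θ w c ∈ G := by
  induction d generalizing G with
  | zero =>
    rw [Nat.add_zero, hF] at hG
    cases hG
    exact ⟨[], fun c hc => hc⟩
  | succ d ih =>
    obtain ⟨F', hF', α, hα⟩ := chain_succ_rel (k+d) hG
    obtain ⟨w, hw⟩ := ih hF'
    refine ⟨w ++ [α], fun c hc => ?_⟩
    rw [tw_append]
    exact hα _ (hw c hc)

include hθ

lemma exists_step {H F : Set X} (hH : IsIdeal H) (hsat : Saturated θ H) (hG : Good H F)
    {r : X} (hr : r ∈ F) (hreg : IsRegularElem θ r) :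
    ∃ α : L, ∀ c ∈ F, θ α c ∉ H := by
  classical
  obtain ⟨hne, hdisj, hinf, hup, hprime⟩ := hG
  have hbotH : (⊥ : X) ∈ H := ideal_bot_mem hH
  set DH : X → Set L := fun x => {α | θ α x ∉ H} with hDH
  have hDHmono : ∀ {x y : X}, x ≤ y → DH x ⊆ DH y := by
    intro x y hxy α hα
    intro hcon
    exact hα (hH.lower hcon (act_mono hθ α hxy))
  have hkey : ∀ c ∈ F, (DH (c ⊓ r)).Finite ∧ (DH (c ⊓ r)).Nonempty := by
    intro c hc
    have hcr : c ⊓ r ∈ F := hinf hc hr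
    have hcrH : c ⊓ r ∉ H := hdisj _ hcr
    have hcrne : c ⊓ r ≠ ⊥ := fun h => hcrH (h ▸ hbotH)
    constructor
    · refine Set.Finite.subset (hreg (c ⊓ r) inf_le_right hcrne).1 ?_
      intro α hα
      exact fun h => hα (h ▸ hbotH)
    · by_contra hno
      rw [Set.not_nonempty_iff_eq_empty] at hno
      have hall : ∀ α : L, θ α (c ⊓ r) ∈ H := by
        intro α
        by_contra hcon
        have : α ∈ DH (c ⊓ r) := hcon
        rw [hno] at this
        exact this
      have hcreg : IsRegularElem θ (c ⊓ r) :=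
        fun b hb hbne => hreg b (le_trans hb inf_le_right) hbne
      exact hcrH (hsat _ hcreg fun α _ => hall α)
  set N : Set ℕ := {n | ∃ c ∈ F, (DH (c ⊓ r)).ncard = n} with hN
  have hNne : N.Nonempty := by
    obtain ⟨c, hc⟩ := hne
    exact ⟨_, c, hc, rfl⟩
  obtain ⟨c₀, hc₀, hcard⟩ := Nat.sInf_mem hNne
  obtain ⟨α, hα⟩ := (hkey c₀ hc₀).2
  have hmain : ∀ c ∈ F, α ∈ DH (c ⊓ r) := by
    intro c hc
    have hcc₀ : c ⊓ c₀ ∈ F := hinf hc hc₀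
    have hsub : DH ((c ⊓ c₀) ⊓ r) ⊆ DH (c₀ ⊓ r) :=
      hDHmono (inf_le_inf_right r inf_le_right)
    have hcardle : (DH (c₀ ⊓ r)).ncard ≤ (DH ((c ⊓ c₀) ⊓ r)).ncard := by
      rw [hcard]
      exact Nat.sInf_le ⟨c ⊓ c₀, hcc₀, rfl⟩
    have heq : DH ((c ⊓ c₀) ⊓ r) = DH (c₀ ⊓ r) :=
      Set.eq_of_subset_of_ncard_le hsub hcardle (hkey c₀ hc₀).1
    have : α ∈ DH ((c ⊓ c₀) ⊓ r) := heq ▸ hα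
    exact hDHmono (inf_le_inf_right r inf_le_left) this
  refine ⟨α, fun c hc hcon => ?_⟩
  exact hmain c hc (hH.lower hcon (act_mono hθ α inf_le_left))

lemma exists_good_step {H F : Set X} (hH : IsIdeal H) (hsat : Saturated θ H)
    (hG : Good H F) {r : X} (hr : r ∈ F) (hreg : IsRegularElem θ r) :
    ∃ G : Set X, Good H G ∧ ∃ α : L, ∀ c ∈ F, θ α c ∈ G := by
  obtain ⟨α, hα⟩ := exists_step hθ hH hsat hG hr hreg
  set G₀ : Set X := {x | ∃ c ∈ F, θ α c ≤ x} with hG₀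
  obtain ⟨G, hGgood, hGsub⟩ := exists_good_ext hH G₀
    (by obtain ⟨c, hc⟩ := hG.1; exact ⟨θ α c, c, hc, le_refl _⟩)
    (by rintro x ⟨c, hc, hle⟩ hxH; exact hα c hc (hH.lower hxH hle))
    (by rintro x y ⟨c, hc, hcle⟩ ⟨d, hd, hdle⟩
        refine ⟨c ⊓ d, hG.2.2.1 hc hd, ?_⟩
        rw [act_inf hθ]
        exact le_inf (le_trans (inf_le_left) hcle |>.trans (le_refl _) |>.trans (le_refl _))
          (le_trans (inf_le_right) hdle))
    (by rintro x y ⟨c, hc, hcle⟩ hxy; exact ⟨c, hc, le_trans hcle hxy⟩)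
  exact ⟨G, hGgood, α, fun c hc => hGsub ⟨c, hc, le_refl _⟩⟩

lemma exists_tail_avoiding {H : Set X} (hH : IsIdeal H) (hher : Hereditary θ H)
    (hsat : Saturated θ H) {a : X} (ha : a ∉ H) :
    ∃ T : Set X, MaximalTail θ T ∧ a ∈ T ∧ ∀ x ∈ T, x ∉ H := by
  classical
  obtain ⟨F0, hF0good, hF0sub⟩ := exists_good_ext hH {x : X | a ≤ x}
    ⟨a, le_refl a⟩
    (fun x hx hxH => ha (hH.lower hxH hx))
    (fun x y hx hy => le_inf hx hy)
    (fun x y hx hxy => le_trans hx hxy)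
  have haF0 : a ∈ F0 := hF0sub (le_refl a)
  set T : Set X := {x | ∃ (k : ℕ) (F : Set X) (γ : List L),
    chainSeq θ H F0 k = some F ∧ thetaWord θ γ x ∈ F} with hT
  have hzero : chainSeq θ H F0 0 = some F0 := by rw [chainSeq]
  have hgood : ∀ k (F : Set X), chainSeq θ H F0 k = some F → Good H F :=
    chain_good hF0good
  have hdisjT : ∀ x ∈ T, x ∉ H := by
    rintro x ⟨k, F, γ, hk, hγ⟩ hxH
    have : thetaWord θ γ x ∈ H := by
      clear hγ
      induction γ generalizing x with
      | nil => exact hxH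
      | cons β γ ih => exact ih _ (hher x hxH β)
    exact (hgood k F hk).2.1 _ hγ this
  have hbotT : (⊥ : X) ∉ T := by
    rintro ⟨k, F, γ, hk, hγ⟩
    rw [tw_bot hθ] at hγ
    exact (hgood k F hk).2.1 _ hγ (ideal_bot_mem hH)
  refine ⟨T, ?_, ⟨0, F0, [], hzero, haF0⟩, hdisjT⟩
  constructor
  · exact ⟨a, 0, F0, [], hzero, haF0⟩
  · exact hbotT
  · rintro x α ⟨k, F, γ, hk, hγ⟩
    exact ⟨k, F, α :: γ, hk, hγ⟩
  · rintro x y ⟨k, F, γ, hk, hγ⟩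
    rw [tw_sup hθ] at hγ
    rcases (hgood k F hk).2.2.2.2 hγ with h | h
    · exact Or.inl ⟨k, F, γ, hk, h⟩
    · exact Or.inr ⟨k, F, γ, hk, h⟩
  · rintro x y ⟨k, F, γ, hk, hγ⟩ hxy
    exact ⟨k, F, γ, hk, (hgood k F hk).2.2.2.1 hγ (tw_mono hθ γ hxy)⟩
  · rintro x ⟨k, F, γ, hk, hγ⟩ hreg
    match γ with
    | α :: γ' => exact ⟨α, k, F, γ', hk, hγ⟩
    | [] =>
      have hex : ∃ G : Set X, Good H G ∧ ∃ α : L, ∀ c ∈ F, θ α c ∈ G :=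
        exists_good_step hθ hH hsat (hgood k F hk) hγ hreg
      have hsucc := chainSeq_succ_some θ H F0 k hk hex
      obtain ⟨hGgood, α, hα⟩ := hex.choose_spec
      exact ⟨α, k+1, hex.choose, [], hsucc, hα x hγ⟩
  · rintro x y ⟨k₁, F₁, γ₁, hk₁, hγ₁⟩ ⟨k₂, F₂, γ₂, hk₂, hγ₂⟩
    rcases le_total k₁ k₂ with h | h
    · obtain ⟨w, hw⟩ := chain_propagate (k₂ - k₁) k₁ hk₁
        (by rw [show k₁ + (k₂ - k₁) = k₂ by omega]; exact hk₂)
      refine ⟨γ₁ ++ w, γ₂, k₂, F₂, [], hk₂, ?_⟩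
      have h1 : thetaWord θ (γ₁ ++ w) x ∈ F₂ := by
        rw [tw_append]
        exact hw _ hγ₁
      exact (hgood k₂ F₂ hk₂).2.2.1 h1 hγ₂
    · obtain ⟨w, hw⟩ := chain_propagate (k₁ - k₂) k₂ hk₂
        (by rw [show k₂ + (k₁ - k₂) = k₁ by omega]; exact hk₁)
      refine ⟨γ₁, γ₂ ++ w, k₁, F₁, [], hk₁, ?_⟩
      have h2 : thetaWord θ (γ₂ ++ w) y ∈ F₁ := by
        rw [tw_append]
        exact hw _ hγ₂
      exact (hgood k₁ F₁ hk₁).2.2.1 hγ₁ h2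

end LemmaM

section T0

variable (hθ : ∀ α : L, IsBoolAction (θ α))
include hθ

lemma reach_ideal (a : X) :
    IsIdeal {x : X | ∀ β γ : List L, thetaWord θ β a ⊓ thetaWord θ γ x = ⊥} ∧
    Hereditary θ {x : X | ∀ β γ : List L, thetaWord θ β a ⊓ thetaWord θ γ x = ⊥} ∧
    Saturated θ {x : X | ∀ β γ : List L, thetaWord θ β a ⊓ thetaWord θ γ x = ⊥} := by
  refine ⟨⟨⟨⊥, fun β γ => by rw [tw_bot hθ, inf_bot_eq]⟩, ?_, ?_⟩, ?_, ?_⟩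
  · intro x y hx hy β γ
    rw [tw_sup hθ, inf_sup_left, hx β γ, hy β γ, sup_bot_eq]
  · intro x y hx hyx β γ
    exact le_bot_iff.1 (le_trans (inf_le_inf_left _ (tw_mono hθ γ hyx)) (le_of_eq (hx β γ)))
  · intro x hx α β γ
    exact hx β (α :: γ)
  · intro x hreg hsub
    intro β γ
    by_contra hne
    match γ with
    | α :: γ' =>
      by_cases hαx : θ α x = ⊥
      · rw [tw_cons, hαx, tw_bot hθ, inf_bot_eq] at hne
        exact hne rfl
      · exact hne (hsub α hαx β γ')
    | [] =>
      rw [tw_nil] at hne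
      set z : X := thetaWord θ β a ⊓ x with hz
      have hzx : z ≤ x := inf_le_right
      have hzne : z ≠ ⊥ := hne
      obtain ⟨α, hα⟩ := (hreg z hzx hzne).2
      have hαz : θ α z ≠ ⊥ := hα
      have hαx : θ α x ≠ ⊥ := by
        intro h
        exact hαz (le_bot_iff.1 (le_trans (act_mono hθ α hzx) (le_of_eq h)))
      have hmem := hsub α hαx (β ++ [α]) []
      rw [tw_nil, tw_append] at hmem
      apply hαz
      rw [hz, act_inf hθ]
      exact le_bot_iff.1 (le_of_eq hmem)

lemma T0_tail (hmin : Minimal θ) {e : X} (he : e ≠ ⊥) :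
    MaximalTail θ {x : X | x ≠ ⊥} := by
  constructor
  · exact ⟨e, he⟩
  · simp
  · intro x α hx
    simp only [Set.mem_setOf_eq] at hx ⊢
    intro h
    rw [h, act_bot hθ] at hx
    exact hx rfl
  · intro x y hxy
    simp only [Set.mem_setOf_eq] at hxy ⊢
    by_contra h
    push_neg at h
    rw [h.1, h.2, sup_bot_eq] at hxy
    exact hxy rfl
  · intro x y hx hxy
    simp only [Set.mem_setOf_eq] at hx ⊢
    intro h
    exact hx (le_bot_iff.1 (h ▸ hxy))
  · intro x hx hreg
    obtain ⟨α, hα⟩ := (hreg x (le_refl x) hx).2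
    exact ⟨α, hα⟩
  · intro x y hx hy
    obtain ⟨hid, hher, hsat⟩ := reach_ideal hθ x
    rcases hmin _ hid hher hsat with h | h
    · have hyH : y ∉ {z : X | ∀ β γ : List L, thetaWord θ β x ⊓ thetaWord θ γ z = ⊥} := by
        intro hyH
        have : y ∈ ({⊥} : Set X) := h ▸ hyH
        exact hy this
      simp only [Set.mem_setOf_eq] at hyH
      push_neg at hyH
      obtain ⟨β, γ, hβγ⟩ := hyH
      exact ⟨β, γ, hβγ⟩
    · exfalso
      have hxH : x ∈ {z : X | ∀ β γ : List L, thetaWord θ β x ⊓ thetaWord θ γ z = ⊥} :=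
        h ▸ Set.mem_univ x
      exact hx (by simpa [tw_nil, inf_idem] using hxH [] [])

end T0

section Trivial

lemma minimal_of_trivial (htriv : ∀ x : X, x = ⊥) : Minimal θ := by
  intro H hH _ _
  left
  ext x
  simp only [Set.mem_singleton_iff]
  constructor
  · intro _; exact htriv x
  · rintro rfl; exact ideal_bot_mem hH

lemma condL_of_trivial (htriv : ∀ x : X, x = ⊥) : CondL θ := by
  rintro ⟨β, a, ⟨_, ha, _⟩, _⟩
  exact ha (htriv a)

lemma condK_of_trivial (htriv : ∀ x : X, x = ⊥) : CondK θ := by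
  rintro ⟨β, η, A, ⟨_, ⟨hfil, _⟩, _⟩, hA, _⟩
  exact hfil.bot_not_mem ((htriv A) ▸ hA)

end Trivial

section NotKNotL

variable (hθ : ∀ α : L, IsBoolAction (θ α))
include hθ

lemma notK_notL (hmin : Minimal θ)
    (h : ∃ (β : List L) (η : Set X) (A : X), UltrafilterCycle θ β η ∧ A ∈ η ∧
      ∀ γ : List L, γ ≠ [] → ∀ b : X, b ≤ A → thetaWord θ γ b ∈ η →
        b ∈ η ∧ ∃ k : ℕ, 0 < k ∧ γ = wordPow β k) :
    ∃ (β : List L) (a : X), IsCycle θ β a ∧ NoExits θ β a := by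
  classical
  obtain ⟨β, η, A, hUC, hA, hwit⟩ := h
  obtain ⟨hβne, hultra, hcyc⟩ := hUC
  have hfil := hultra.1
  have hn : 0 < β.length := List.length_pos_iff.2 hβne
  -- cofinality from minimality
  have htail := uc_tail hθ ⟨hβne, hultra, hcyc⟩
  have cofin : ∀ x : X, x ≠ ⊥ → ∃ γ : List L, thetaWord θ γ x ∈ η := by
    obtain ⟨hid, hher, hsat⟩ := compl_tail_ideal htail
    rcases hmin _ hid hher hsat with h | h
    · intro x hx
      by_contra hcon
      have : x ∈ {y : X | y ∉ {b : X | ∃ γ : List L, thetaWord θ γ b ∈ η}} := by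
        intro hmem; exact hcon hmem
      rw [h] at this
      exact hx this
    · exfalso
      have : A ∈ {y : X | y ∉ {b : X | ∃ γ : List L, thetaWord θ γ b ∈ η}} :=
        h ▸ Set.mem_univ A
      exact this ⟨[], hA⟩
  have hAne : A ≠ ⊥ := fun h => hfil.bot_not_mem (h ▸ hA)
  -- everything nonzero below A is in η
  have hsubη : ∀ y : X, y ≤ A → y ≠ ⊥ → y ∈ η := by
    intro y hyA hyne
    obtain ⟨γ, hγ⟩ := cofin y hyne
    match γ, hγ with
    | [], hγ => exact hγ
    | α :: γ', hγ => exact (hwit (α :: γ') (by simp) y hyA hγ).1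
  -- A is an atom
  have hatom : ∀ y : X, y ≤ A → y = ⊥ ∨ y = A := by
    intro y hyA
    by_cases hy : y = ⊥
    · exact Or.inl hy
    by_cases hAy : A \ y = ⊥
    · exact Or.inr (le_antisymm hyA (sdiff_eq_bot_iff.1 hAy))
    · exfalso
      have h1 : y ∈ η := hsubη y hyA hy
      have h2 : A \ y ∈ η := hsubη (A \ y) sdiff_le hAy
      have h3 : y ⊓ (A \ y) ∈ η := hfil.inf_mem h1 h2
      rw [inf_sdiff_self_right] at h3
      exact hfil.bot_not_mem h3
  have hmemA : ∀ x : X, x ∈ η → A ≤ x := by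
    intro x hx
    have h1 : A ⊓ x ∈ η := hfil.inf_mem hA hx
    have h2 : A ⊓ x ≠ ⊥ := fun h => hfil.bot_not_mem (h ▸ h1)
    rcases hatom (A ⊓ x) inf_le_left with h | h
    · exact absurd h h2
    · exact inf_eq_left.1 h
  have hpow : ∀ j : ℕ, A ≤ thetaWord θ (wordPow β j) A := by
    have hβA : A ≤ thetaWord θ β A := hmemA _ (hcyc A hA)
    intro j
    induction j with
    | zero => exact le_refl A
    | succ j ih =>
      show A ≤ thetaWord θ (β ++ wordPow β j) A
      rw [tw_append]
      exact le_trans ih (tw_mono hθ _ hβA)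
  -- θ_β fixes A
  have hfixA : thetaWord θ β A = A := by
    have hβA : A ≤ thetaWord θ β A := hmemA _ (hcyc A hA)
    by_cases hB : thetaWord θ β A \ A = ⊥
    · exact le_antisymm (sdiff_eq_bot_iff.1 hB) hβA
    · exfalso
      obtain ⟨γ, hγ⟩ := cofin _ hB
      have h1 : thetaWord θ (β ++ γ) A ∈ η := by
        rw [tw_append]
        exact hfil.upper hγ (tw_mono hθ γ sdiff_le)
      obtain ⟨-, k, hk, heq⟩ := hwit (β ++ γ) (by simp [hβne]) A (le_refl A) h1
      match k, hk with
      | k' + 1, _ =>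
        have hγeq : γ = wordPow β k' := List.append_cancel_left heq
        match k', hγeq with
        | 0, hγeq =>
          subst hγeq
          have h2 : A ⊓ (thetaWord θ β A \ A) ∈ η := hfil.inf_mem hA hγ
          rw [inf_sdiff_self_right] at h2
          exact hfil.bot_not_mem h2
        | k'' + 1, hγeq =>
          subst hγeq
          have h3 : A ≤ thetaWord θ (wordPow β (k''+1)) (thetaWord θ β A \ A) :=
            hmemA _ hγ
          have h4 : A ≤ thetaWord θ (wordPow β (k''+1))
              ((thetaWord θ β A \ A) ⊓ A) := by
            rw [tw_inf hθ]
            exact le_inf h3 (le_trans (hpow (k''+1)) (le_refl _))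
          rw [inf_sdiff_self_left, tw_bot hθ] at h4
          exact hAne (le_bot_iff.1 h4)
  -- the key claim: every nonzero element below a partial image of A has singleton Delta
  have hclaim : ∀ t : ℕ, t ≤ β.length → ∀ z : X,
      z ≤ thetaWord θ (β.take t) A → z ≠ ⊥ →
      Delta θ z = {β[t % β.length]'(Nat.mod_lt _ hn)} := by
    intro t ht z hz hzne
    have hsub : ∀ α : L, α ∈ Delta θ z → α = β[t % β.length]'(Nat.mod_lt _ hn) := by
      intro α hα
      obtain ⟨γ, hγ⟩ := cofin _ hα
      have h1 : thetaWord θ (β.take t ++ α :: γ) A ∈ η := by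
        rw [tw_append, tw_cons]
        exact hfil.upper hγ (tw_mono hθ γ (act_mono hθ α hz))
      obtain ⟨-, k, hk, heq⟩ := hwit _ (by simp) A (le_refl A) h1
      have hlen : (β.take t).length = t := by
        rw [List.length_take]; omega
      have hq1 : (β.take t ++ α :: γ)[t]? = some α := by
        rw [List.getElem?_append_right (le_of_eq hlen), hlen, Nat.sub_self]
        simp
      rw [heq] at hq1
      have htlt : t < (wordPow β k).length := by
        have := congrArg List.length heq
        rw [List.length_append, hlen] at this
        simp only [List.length_cons] at this
        omega
      rw [List.getElem?_eq_getElem htlt, wordPow_getElem β k t htlt hn] at hq1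
      exact (Option.some_injective _ hq1).symm
    have hne2 : (β[t % β.length]'(Nat.mod_lt _ hn)) ∈ Delta θ z := by
      obtain ⟨γ, hγ⟩ := cofin z hzne
      match γ, hγ with
      | [], hγ =>
        have h1 : thetaWord θ β z ∈ η := hcyc z hγ
        have h2 : thetaWord θ β z ≠ ⊥ := fun h => hfil.bot_not_mem (h ▸ h1)
        have hcons : β.head hβne :: β.tail = β := List.cons_head_tail hβne
        have h3 : θ (β.head hβne) z ≠ ⊥ := by
          intro h
          apply h2
          rw [← hcons, tw_cons, h, tw_bot hθ]
        have := hsub (β.head hβne) h3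
        rw [← this]
        exact h3
      | α :: γ', hγ =>
        have h3 : θ α z ≠ ⊥ := tw_ne_bot_of hθ γ' (fun h => hfil.bot_not_mem (h ▸ hγ))
        have := hsub α h3
        rw [← this]
        exact h3
    ext α
    simp only [Set.mem_singleton_iff]
    exact ⟨fun h => hsub α h, fun h => h ▸ hne2⟩
  refine ⟨β, A, ⟨hβne, hAne, ?_⟩, ?_⟩
  · intro b hb
    rcases hatom b hb with rfl | rfl
    · exact tw_bot hθ β
    · exact hfixA
  · intro t ht1 htn y hy hyne
    have hD := hclaim t htn y hy hyne
    constructor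
    · intro b hb hbne
      have hDb := hclaim t htn b (le_trans hb hy) hbne
      rw [hDb]
      exact ⟨Set.finite_singleton _, ⟨_, rfl⟩⟩
    · rw [hD]
      ext α
      simp only [Set.mem_singleton_iff, Set.mem_setOf_eq,
        List.getElem?_eq_getElem (Nat.mod_lt t hn), Option.some.injEq]
      exact eq_comm

end NotKNotL

section NotLNotK

variable (hθ : ∀ α : L, IsBoolAction (θ α))
variable {β : List L} {a : X}

lemma delta_singleton_of {y : X} {s : ℕ} (hs : s < β.length)
    (hD : Delta θ y = {α : L | β[s]? = some α}) : Delta θ y = {β[s]'hs} := by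
  rw [hD]
  ext α
  simp [List.getElem?_eq_getElem hs, eq_comm]

variable (hC : IsCycle θ β a) (hN : NoExits θ β a)
include hθ hC hN

lemma cyc_fact (t : ℕ) {y : X}
    (hy : y ≤ thetaWord θ (β.take (t % β.length)) a) (hyne : y ≠ ⊥) :
    IsRegularElem θ y ∧
      Delta θ y = {β[t % β.length]'(Nat.mod_lt _ (List.length_pos_iff.2 hC.1))} := by
  have hn : 0 < β.length := List.length_pos_iff.2 hC.1
  have hr : t % β.length < β.length := Nat.mod_lt _ hn
  rcases Nat.eq_zero_or_pos (t % β.length) with h0 | hpos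
  · rw [h0] at hy
    rw [List.take_zero, tw_nil] at hy
    have hy' : y ≤ thetaWord θ (β.take β.length) a := by
      rw [List.take_length]
      rw [hC.2.2 a (le_refl a)]
      exact hy
    obtain ⟨hreg, hD⟩ := hN β.length hn (le_refl _) y hy' hyne
    refine ⟨hreg, ?_⟩
    rw [Nat.mod_self] at hD
    simp only [h0]
    exact delta_singleton_of hn hD
  · obtain ⟨hreg, hD⟩ := hN (t % β.length) hpos (le_of_lt hr) y hy hyne
    refine ⟨hreg, ?_⟩
    rw [Nat.mod_eq_of_lt hr] at hD
    exact delta_singleton_of hr hD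

lemma cyc_key (t : ℕ) :
    thetaWord θ (β.take (t % β.length + 1)) a
      = thetaWord θ (β.take ((t+1) % β.length)) a := by
  have hn : 0 < β.length := List.length_pos_iff.2 hC.1
  have hr : t % β.length < β.length := Nat.mod_lt _ hn
  by_cases hr1 : t % β.length + 1 < β.length
  · have hmod : (t+1) % β.length = t % β.length + 1 := by
      have hdm := Nat.div_add_mod t β.length
      rw [show t + 1 = t % β.length + 1 + β.length * (t / β.length) by omega]
      rw [Nat.add_mul_mod_self_left]
      exact Nat.mod_eq_of_lt hr1
    rw [hmod]
  · have heq : t % β.length + 1 = β.length := by omega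
    have hmod : (t+1) % β.length = 0 := by
      have hdm := Nat.div_add_mod t β.length
      rw [show t + 1 = β.length * (t / β.length + 1) by
        rw [Nat.mul_add, Nat.mul_one]; omega]
      exact Nat.mul_mod_right _ _
    rw [heq, hmod, List.take_length, List.take_zero, tw_nil]
    exact hC.2.2 a (le_refl a)

lemma cyc_step (t : ℕ) {y : X}
    (hy : y ≤ thetaWord θ (β.take (t % β.length)) a) (hyne : y ≠ ⊥) :
    θ (β[t % β.length]'(Nat.mod_lt _ (List.length_pos_iff.2 hC.1))) y ≠ ⊥ ∧
      θ (β[t % β.length]'(Nat.mod_lt _ (List.length_pos_iff.2 hC.1))) y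
        ≤ thetaWord θ (β.take ((t+1) % β.length)) a := by
  have hn : 0 < β.length := List.length_pos_iff.2 hC.1
  have hr : t % β.length < β.length := Nat.mod_lt _ hn
  obtain ⟨hreg, hD⟩ := cyc_fact hθ hC hN t hy hyne
  constructor
  · have : (β[t % β.length]'hr) ∈ Delta θ y := by rw [hD]; rfl
    exact this
  · calc θ (β[t % β.length]'hr) y
        ≤ θ (β[t % β.length]'hr) (thetaWord θ (β.take (t % β.length)) a) :=
          act_mono hθ _ hy
      _ = thetaWord θ (β.take (t % β.length + 1)) a := by
          rw [tw_take_succ hθ β _ hr a]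
      _ = thetaWord θ (β.take ((t+1) % β.length)) a := cyc_key hθ hC hN t

lemma cyc_track (γ : List L) (y : X) (hy : y ≤ a) (hne : thetaWord θ γ y ≠ ⊥) :
    ∀ i (hi : i ≤ γ.length),
      (∀ j (hj : j < i), γ[j]'(lt_of_lt_of_le hj hi)
          = β[j % β.length]'(Nat.mod_lt _ (List.length_pos_iff.2 hC.1))) ∧
      thetaWord θ (γ.take i) y ≤ thetaWord θ (β.take (i % β.length)) a := by
  have hn : 0 < β.length := List.length_pos_iff.2 hC.1
  intro i
  induction i with
  | zero =>
    intro _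
    refine ⟨fun j hj => absurd hj (Nat.not_lt_zero j), ?_⟩
    rw [Nat.zero_mod, List.take_zero, List.take_zero, tw_nil, tw_nil]
    exact hy
  | succ i ih =>
    intro hi
    have hilen : i < γ.length := by omega
    obtain ⟨htr, hle⟩ := ih (le_of_lt hilen)
    have hxne : thetaWord θ (γ.take i) y ≠ ⊥ := by
      intro h
      apply hne
      rw [← List.take_append_drop i γ, tw_append, h, tw_bot hθ]
    have hnext : thetaWord θ (γ.take (i+1)) y = θ (γ[i]'hilen) (thetaWord θ (γ.take i) y) :=
      tw_take_succ hθ γ i hilen y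
    have hnextne : θ (γ[i]'hilen) (thetaWord θ (γ.take i) y) ≠ ⊥ := by
      intro h
      apply hne
      rw [← List.take_append_drop (i+1) γ, tw_append, hnext, h, tw_bot hθ]
    obtain ⟨hreg, hD⟩ := cyc_fact hθ hC hN i hle hxne
    have hmem : (γ[i]'hilen) ∈ Delta θ (thetaWord θ (γ.take i) y) := hnextne
    rw [hD] at hmem
    have hγi : γ[i]'hilen = β[i % β.length]'(Nat.mod_lt _ hn) := hmem
    constructor
    · intro j hj
      rcases Nat.lt_or_ge j i with h | h
      · exact htr j h
      · have : j = i := by omega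
        subst this
        exact hγi
    · rw [hnext, hγi]
      exact (cyc_step hθ hC hN i hle hxne).2

lemma cyc_rho_chain (r : ℕ) (hrn : r < β.length) :
    ∀ s : ℕ, r + s ≤ β.length → ∀ y : X, y ≤ thetaWord θ (β.take r) a → y ≠ ⊥ →
      thetaWord θ ((β.drop r).take s) y ≠ ⊥ ∧
        thetaWord θ ((β.drop r).take s) y ≤ thetaWord θ (β.take ((r+s) % β.length)) a := by
  have hn : 0 < β.length := List.length_pos_iff.2 hC.1
  intro s
  induction s with
  | zero =>
    intro _ y hy hyne
    rw [List.take_zero, tw_nil]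
    refine ⟨hyne, ?_⟩
    rw [Nat.add_zero, Nat.mod_eq_of_lt hrn]
    exact hy
  | succ s ih =>
    intro hs y hy hyne
    have hrs : r + s < β.length := by omega
    obtain ⟨hzne, hzle⟩ := ih (by omega) y hy hyne
    have hslen : s < (β.drop r).length := by rw [List.length_drop]; omega
    have hnext : thetaWord θ ((β.drop r).take (s+1)) y
        = θ ((β.drop r)[s]'hslen) (thetaWord θ ((β.drop r).take s) y) :=
      tw_take_succ hθ (β.drop r) s hslen y
    have hidx : (β.drop r)[s]'hslen = β[(r+s) % β.length]'(Nat.mod_lt _ hn) := by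
      rw [List.getElem_drop]
      congr 1
      exact (Nat.mod_eq_of_lt hrs).symm
    have hzle' : thetaWord θ ((β.drop r).take s) y
        ≤ thetaWord θ (β.take ((r+s) % β.length)) a := hzle
    obtain ⟨h1, h2⟩ := cyc_step hθ hC hN (r+s) hzle' hzne
    rw [hnext, hidx]
    refine ⟨h1, ?_⟩
    rw [show r + (s+1) = (r + s) + 1 by omega]
    exact h2

lemma cyc_rho_nonbot (r : ℕ) (hrn : r < β.length) {y : X}
    (hy : y ≤ thetaWord θ (β.take r) a) (hyne : y ≠ ⊥) :
    thetaWord θ (β.drop r) y ≠ ⊥ ∧ thetaWord θ (β.drop r) y ≤ a := by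
  have hn : 0 < β.length := List.length_pos_iff.2 hC.1
  have h := cyc_rho_chain hθ hC hN r hrn (β.length - r) (by omega) y hy hyne
  rw [show (β.drop r).take (β.length - r) = β.drop r by
    rw [← List.length_drop, List.take_length]] at h
  rw [show (r + (β.length - r)) % β.length = 0 by
    rw [show r + (β.length - r) = β.length by omega, Nat.mod_self]] at h
  rw [List.take_zero, tw_nil] at h
  exact h

lemma cyc_rho_phi {y : X} (hy : y ≤ a) :
    thetaWord θ (β.drop r) (thetaWord θ (β.take r) y) = y := by
  rw [← tw_append, List.take_append_drop]
  exact hC.2.2 y hy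

lemma cyc_rho_inj (r : ℕ) (hrn : r < β.length) {y z : X}
    (hy : y ≤ thetaWord θ (β.take r) a) (hz : z ≤ thetaWord θ (β.take r) a)
    (h : thetaWord θ (β.drop r) y = thetaWord θ (β.drop r) z) : y = z := by
  have hkey : ∀ u v : X, u ≤ thetaWord θ (β.take r) a → v ≤ thetaWord θ (β.take r) a →
      thetaWord θ (β.drop r) u = thetaWord θ (β.drop r) v → u \ v = ⊥ := by
    intro u v hu hv huv
    by_contra hne
    have hsd : thetaWord θ (β.drop r) (u \ v) ≠ ⊥ :=
      (cyc_rho_nonbot hθ hC hN r hrn (le_trans sdiff_le hu) hne).1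
    apply hsd
    rw [tw_sdiff hθ, huv, sdiff_self]
  have h1 := hkey y z hy hz h
  have h2 := hkey z y hz hy h.symm
  exact le_antisymm (sdiff_eq_bot_iff.1 h1) (sdiff_eq_bot_iff.1 h2)

lemma cyc_phi_rho (r : ℕ) (hrn : r < β.length) {z : X}
    (hz : z ≤ thetaWord θ (β.take r) a) :
    thetaWord θ (β.take r) (thetaWord θ (β.drop r) z) = z := by
  by_cases hzb : z = ⊥
  · subst hzb; rw [tw_bot hθ, tw_bot hθ]
  have hu : thetaWord θ (β.drop r) z ≤ a := (cyc_rho_nonbot hθ hC hN r hrn hz hzb).2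
  have h1 : thetaWord θ (β.drop r) (thetaWord θ (β.take r) (thetaWord θ (β.drop r) z))
      = thetaWord θ (β.drop r) z := cyc_rho_phi hθ hC hN hu
  exact cyc_rho_inj hθ hC hN r hrn
    (le_trans (tw_mono hθ _ hu) (le_of_eq rfl)) hz h1

end NotLNotK

section NotLNotK2

variable (hθ : ∀ α : L, IsBoolAction (θ α))
variable {β : List L} {a : X}

lemma delta_setOf_glue {y : X} {l : List L} {s : ℕ} (hs : s < l.length) (w : L)
    (hw : l[s]'hs = w) (hD : Delta θ y = {w}) :
    Delta θ y = {α : L | l[s]? = some α} := by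
  rw [hD]
  ext α
  simp [List.getElem?_eq_getElem hs, hw, eq_comm]

variable (hC : IsCycle θ β a) (hN : NoExits θ β a)
include hθ hC hN

lemma cyc_sep (r : ℕ) (hr0 : 0 < r) (hrn : r < β.length)
    (hnofix : ∀ x : X, x ≠ ⊥ → x ≤ a → ∃ y, y ≤ x ∧ thetaWord θ (β.take r) y ≠ y)
    {b : X} (hb : b ≤ a) (hbne : b ≠ ⊥) :
    ∃ b' : X, b' ≤ b ∧ b' ≠ ⊥ ∧ b' ⊓ thetaWord θ (β.take r) b' = ⊥ := by
  obtain ⟨y, hyb, hyfix⟩ := hnofix b hbne hb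
  have hyne : y ≠ ⊥ := by rintro rfl; exact hyfix (tw_bot hθ _)
  have hya : y ≤ a := le_trans hyb hb
  by_cases hcase : y \ thetaWord θ (β.take r) y = ⊥
  · have hyφ : y ≤ thetaWord θ (β.take r) y := sdiff_eq_bot_iff.1 hcase
    have hyAr : y ≤ thetaWord θ (β.take r) a := le_trans hyφ (tw_mono hθ _ hya)
    have hρφ : thetaWord θ (β.drop r) (thetaWord θ (β.take r) y) = y :=
      cyc_rho_phi hθ hC hN hya
    have hρy : thetaWord θ (β.drop r) y ≤ y := by
      calc thetaWord θ (β.drop r) y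
          ≤ thetaWord θ (β.drop r) (thetaWord θ (β.take r) y) := tw_mono hθ _ hyφ
        _ = y := hρφ
    have hzne : y \ thetaWord θ (β.drop r) y ≠ ⊥ := by
      intro h
      have heq : y = thetaWord θ (β.drop r) y := le_antisymm (sdiff_eq_bot_iff.1 h) hρy
      have hφρ := cyc_phi_rho hθ hC hN r hrn hyAr
      rw [← heq] at hφρ
      exact hyfix hφρ
    have hφz : thetaWord θ (β.take r) (y \ thetaWord θ (β.drop r) y)
        = thetaWord θ (β.take r) y \ y := by
      rw [tw_sdiff hθ, cyc_phi_rho hθ hC hN r hrn hyAr]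
    refine ⟨y \ thetaWord θ (β.drop r) y, le_trans sdiff_le hyb, hzne, ?_⟩
    rw [hφz]
    have h1 : (y \ thetaWord θ (β.drop r) y) ⊓ (thetaWord θ (β.take r) y \ y)
        ≤ y ⊓ (thetaWord θ (β.take r) y \ y) := inf_le_inf_right _ sdiff_le
    rw [inf_sdiff_self_right] at h1
    exact le_bot_iff.1 h1
  · refine ⟨y \ thetaWord θ (β.take r) y, le_trans sdiff_le hyb, hcase, ?_⟩
    have h1 : (y \ thetaWord θ (β.take r) y) ⊓ thetaWord θ (β.take r) (y \ thetaWord θ (β.take r) y)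
        ≤ (y \ thetaWord θ (β.take r) y) ⊓ thetaWord θ (β.take r) y :=
      inf_le_inf_left _ (tw_mono hθ _ sdiff_le)
    rw [inf_sdiff_self_left] at h1
    exact le_bot_iff.1 h1

lemma cyc_sepall
    (hnofix : ∀ r : ℕ, 0 < r → r < β.length → ∀ x : X, x ≠ ⊥ → x ≤ a →
      ∃ y, y ≤ x ∧ thetaWord θ (β.take r) y ≠ y) :
    ∃ b : X, b ≤ a ∧ b ≠ ⊥ ∧
      ∀ r : ℕ, 0 < r → r < β.length → b ⊓ thetaWord θ (β.take r) b = ⊥ := by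
  suffices h : ∀ t : ℕ, ∃ b : X, b ≤ a ∧ b ≠ ⊥ ∧
      ∀ r : ℕ, 0 < r → r < β.length → r ≤ t → b ⊓ thetaWord θ (β.take r) b = ⊥ by
    obtain ⟨b, h1, h2, h3⟩ := h β.length
    exact ⟨b, h1, h2, fun r hr0 hrn => h3 r hr0 hrn (le_of_lt hrn)⟩
  intro t
  induction t with
  | zero => exact ⟨a, le_refl a, hC.2.1, fun r hr0 _ hr => absurd hr (by omega)⟩
  | succ t ih =>
    obtain ⟨b, hba, hbne, hsep⟩ := ih
    by_cases hcase : t + 1 < β.length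
    · obtain ⟨b', hb'b, hb'ne, hb'sep⟩ :=
        cyc_sep hθ hC hN (t+1) (Nat.succ_pos t) hcase (hnofix (t+1) (Nat.succ_pos t) hcase)
          hba hbne
      refine ⟨b', le_trans hb'b hba, hb'ne, ?_⟩
      intro r hr0 hrn hrt
      rcases Nat.lt_or_ge r (t+1) with h | h
      · have h1 : b' ⊓ thetaWord θ (β.take r) b' ≤ b ⊓ thetaWord θ (β.take r) b :=
          inf_le_inf hb'b (tw_mono hθ _ hb'b)
        rw [hsep r hr0 hrn (by omega)] at h1
        exact le_bot_iff.1 h1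
      · have : r = t + 1 := by omega
        subst this
        exact hb'sep
    · exact ⟨b, hba, hbne, fun r hr0 hrn hrt => hsep r hr0 hrn (by omega)⟩

end NotLNotK2

section NotLNotK3

variable (hθ : ∀ α : L, IsBoolAction (θ α))
include hθ

lemma notL_notK_main : ∀ n : ℕ, ∀ (β : List L) (a : X), β.length = n →
    IsCycle θ β a → NoExits θ β a →
    ∃ (β' : List L) (η : Set X) (A : X), UltrafilterCycle θ β' η ∧ A ∈ η ∧
      ∀ γ : List L, γ ≠ [] → ∀ y : X, y ≤ A → thetaWord θ γ y ∈ η →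
        y ∈ η ∧ ∃ k : ℕ, 0 < k ∧ γ = wordPow β' k := by
  intro n
  induction n using Nat.strong_induction_on with
  | _ n IH =>
    intro β a hlen hC hN
    have hn : 0 < β.length := List.length_pos_iff.2 hC.1
    by_cases hfix : ∃ r : ℕ, 0 < r ∧ r < β.length ∧
        ∃ x : X, x ≠ ⊥ ∧ x ≤ a ∧ ∀ y : X, y ≤ x → thetaWord θ (β.take r) y = y
    · obtain ⟨r, hr0, hrn, x, hxne, hxa, hxfix⟩ := hfix
      have hlen' : (β.take r).length = r := by rw [List.length_take]; omega
      apply IH r (by omega) (β.take r) x hlen'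
      · refine ⟨?_, hxne, fun b hb => hxfix b hb⟩
        intro h
        rw [h] at hlen'
        simp at hlen'
        omega
      · -- NoExits for the shorter cycle
        intro t ht1 htr y hy hyne
        rw [hlen'] at htr
        have htake : (β.take r).take t = β.take t := by
          rw [List.take_take]
          congr 1
          omega
        rw [htake] at hy
        rcases Nat.lt_or_ge t r with hlt | hge
        · -- t < r
          have hy' : y ≤ thetaWord θ (β.take (t % β.length)) a := by
            rw [Nat.mod_eq_of_lt (by omega)]
            exact le_trans hy (tw_mono hθ _ hxa)
          obtain ⟨hreg, hD⟩ := cyc_fact hθ hC hN t hy' hyne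
          refine ⟨hreg, ?_⟩
          have hs : t % (β.take r).length < (β.take r).length := by
            rw [hlen']; exact Nat.mod_lt _ hr0
          refine delta_setOf_glue hs _ ?_ hD
          have hidx : t % (β.take r).length = t := by
            rw [hlen']; exact Nat.mod_eq_of_lt hlt
          simp only [hidx, List.getElem_take]
          congr 1
          exact (Nat.mod_eq_of_lt (by omega)).symm
        · -- t = r
          have ht : t = r := by omega
          subst ht
          have hfx : thetaWord θ (β.take t) x = x := hxfix x (le_refl x)
          rw [hfx] at hy
          have hy' : y ≤ thetaWord θ (β.take (0 % β.length)) a := by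
            rw [Nat.zero_mod, List.take_zero, tw_nil]
            exact le_trans hy hxa
          obtain ⟨hreg, hD⟩ := cyc_fact hθ hC hN 0 hy' hyne
          refine ⟨hreg, ?_⟩
          have hs : t % (β.take t).length < (β.take t).length := by
            rw [hlen', Nat.mod_self]; omega
          refine delta_setOf_glue hs _ ?_ hD
          have hidx : t % (β.take t).length = 0 := by
            rw [hlen']; exact Nat.mod_self t
          simp only [hidx, List.getElem_take]
          congr 1
    · push_neg at hfix
      obtain ⟨b, hba, hbne, hsep⟩ := cyc_sepall hθ hC hN (fun r hr0 hrn x hxne hxa => by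
        obtain ⟨y, hy1, hy2⟩ := hfix r hr0 hrn x hxne hxa
        exact ⟨y, hy1, hy2⟩)
      obtain ⟨η, hultra, hbη⟩ := exists_ultra hbne
      refine ⟨β, η, b, ⟨hC.1, hultra, ?_⟩, hbη, ?_⟩
      · intro c hc
        have h1 : c ⊓ b ∈ η := hultra.1.inf_mem hc hbη
        have h2 : thetaWord θ β (c ⊓ b) = c ⊓ b := hC.2.2 _ (le_trans inf_le_right hba)
        exact hultra.1.upper h1 (by rw [← h2]; exact tw_mono hθ β inf_le_left)
      · intro γ hγne y hyb hγη
        have hne : thetaWord θ γ y ≠ ⊥ := fun h => hultra.1.bot_not_mem (h ▸ hγη)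
        have hya : y ≤ a := le_trans hyb hba
        obtain ⟨htr, -⟩ := cyc_track hθ hC hN γ y hya hne γ.length (le_refl _)
        have hdm := Nat.div_add_mod γ.length β.length
        obtain ⟨k0, hk0⟩ : ∃ k0, γ.length / β.length = k0 := ⟨_, rfl⟩
        obtain ⟨r0, hr0⟩ : ∃ r0, γ.length % β.length = r0 := ⟨_, rfl⟩
        have hr0n : r0 < β.length := hr0 ▸ Nat.mod_lt _ hn
        have hlen0 : γ.length = k0 * β.length + r0 := by
          rw [← hk0, ← hr0, Nat.mul_comm]; omega
        have heq : γ = wordPow β k0 ++ β.take r0 :=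
          eq_wordPow_append_track β γ hn k0 r0 hlen0 hr0n (fun j hj => htr j hj)
        by_cases hr : r0 = 0
        · subst hr
          have heq' : γ = wordPow β k0 := by
            rw [heq, List.take_zero, List.append_nil]
          have hk : 0 < k0 := by
            rcases Nat.eq_zero_or_pos k0 with h | h
            · exfalso
              subst h
              simp only [Nat.zero_mul, Nat.add_zero] at hlen0
              exact hγne (List.length_eq_zero_iff.1 hlen0)
            · exact h
          have hfixy : thetaWord θ γ y = y := by
            rw [heq']; exact tw_wordPow_fix hθ hC.2.2 hya _
          exact ⟨by rw [← hfixy]; exact hγη, k0, hk, heq'⟩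
        · exfalso
          have h1 : thetaWord θ γ y ≤ thetaWord θ (β.take r0) b := by
            calc thetaWord θ γ y ≤ thetaWord θ γ b := tw_mono hθ γ hyb
              _ = thetaWord θ (β.take r0) (thetaWord θ (wordPow β k0) b) := by
                  rw [heq, tw_append]
              _ = thetaWord θ (β.take r0) b := by
                  rw [tw_wordPow_fix hθ hC.2.2 hba]
          have h2 : b ⊓ thetaWord θ γ y ∈ η := hultra.1.inf_mem hbη hγη
          have h3 : b ⊓ thetaWord θ γ y ≤ b ⊓ thetaWord θ (β.take r0) b :=
            inf_le_inf_left b h1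
          rw [hsep _ (Nat.pos_of_ne_zero hr) hr0n] at h3
          rw [le_bot_iff.1 h3] at h2
          exact hultra.1.bot_not_mem h2

end NotLNotK3

section Assemble

variable (hθ : ∀ α : L, IsBoolAction (θ α))
include hθ

lemma condK_of_condL (hmin : Minimal θ) (hL : CondL θ) : CondK θ := by
  intro hKfail
  exact hL (notK_notL hθ hmin hKfail)

lemma condL_of_condK (hK : CondK θ) : CondL θ := by
  rintro ⟨β, a, hC, hN⟩
  exact hK (notL_notK_main hθ β.length β a rfl hC hN)

lemma min_of_unique_tail
    (h1 : MaximalTail θ {a : X | a ≠ ⊥} ∧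
      ∀ T : Set X, MaximalTail θ T → T = {a : X | a ≠ ⊥}) : Minimal θ := by
  intro H hH hher hsat
  by_cases hU : H = Set.univ
  · exact Or.inr hU
  · left
    obtain ⟨x, hx⟩ := (Set.ne_univ_iff_exists_notMem H).1 hU
    obtain ⟨T, hT, hxT, hTdisj⟩ := exists_tail_avoiding hθ hH hher hsat hx
    have hTeq := h1.2 T hT
    ext z
    simp only [Set.mem_singleton_iff]
    constructor
    · intro hz
      by_contra hzne
      have : z ∈ T := hTeq ▸ (hzne : z ∈ {a : X | a ≠ ⊥})
      exact hTdisj z this hz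
    · rintro rfl
      exact ideal_bot_mem hH

end Assemble

end BoolDynAux

/-- **Statement 17.** The following are equivalent: (1) either `B = {∅}`, or `B ∖ {∅}` is the
only maximal tail and it is not cyclic; (2) `(B, L, θ)` is minimal and satisfies Condition
(L); (3) `(B, L, θ)` is minimal and satisfies Condition (K). -/
theorem minimal_condL_condK_tfae
    {X L : Type*} [GeneralizedBooleanAlgebra X] (θ : L → X → X)
    (hθ : ∀ α : L, IsBoolAction (θ α)) :
    (((∀ a : X, a = ⊥) ∨
        ((MaximalTail θ {a : X | a ≠ ⊥} ∧
            ∀ T : Set X, MaximalTail θ T → T = {a : X | a ≠ ⊥}) ∧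
          ¬ CyclicTail θ {a : X | a ≠ ⊥})) ↔
      (Minimal θ ∧ CondL θ)) ∧
    ((Minimal θ ∧ CondL θ) ↔ (Minimal θ ∧ CondK θ)) := by
  
  classical
  by_cases htriv : ∀ x : X, x = ⊥
  · refine ⟨⟨fun _ => ⟨BoolDynAux.minimal_of_trivial htriv, BoolDynAux.condL_of_trivial htriv⟩,
      fun _ => Or.inl htriv⟩, ?_⟩
    exact ⟨fun h => ⟨h.1, BoolDynAux.condK_of_trivial htriv⟩,
      fun h => ⟨h.1, BoolDynAux.condL_of_trivial htriv⟩⟩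
  · push_neg at htriv
    obtain ⟨e, he⟩ := htriv
    have iff2 : (Minimal θ ∧ CondL θ) ↔ (Minimal θ ∧ CondK θ) :=
      ⟨fun h => ⟨h.1, BoolDynAux.condK_of_condL hθ h.1 h.2⟩,
        fun h => ⟨h.1, BoolDynAux.condL_of_condK hθ h.2⟩⟩
    refine ⟨?_, iff2⟩
    constructor
    · rintro (h | ⟨h1, h2⟩)
      · exact absurd (h e) he
      · have hmin := BoolDynAux.min_of_unique_tail hθ h1
        refine ⟨hmin, ?_⟩
        have hK : CondK θ := by
          rintro ⟨β, η, A, hUC, hA, hwit⟩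
          apply h2
          exact ⟨β, η, hUC, (h1.2 _ (BoolDynAux.uc_tail hθ hUC)).symm, A, hA, hwit⟩
        exact BoolDynAux.condL_of_condK hθ hK
    · rintro ⟨hmin, hL⟩
      right
      have hK := BoolDynAux.condK_of_condL hθ hmin hL
      have htail : MaximalTail θ {a : X | a ≠ ⊥} := BoolDynAux.T0_tail hθ hmin he
      refine ⟨⟨htail, fun T hT => BoolDynAux.tail_unique hmin hT⟩, ?_⟩
      rintro ⟨β, η, hUC, hTeq, A, hA, hwit⟩
      exact hK ⟨β, η, A, hUC, hA, hwit⟩
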